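/- For any k > 0 and list data of data points, there exists a list lst such that Contents_kdtree (build_kdtree k data) lst and data is a permutation of lst. -/

import Mathlib

/-- `le` is transitive and total. -/
def le_props {X : Type} (le : X → X → Bool) : Prop :=
  (∀ a b c, le a b = true → le b c = true → le a c = true) ∧
  (∀ a b, le a b = true ∨ le b a = true)

/-- Fueled quickselect. -/
def qsp {X : Type} : Nat → Nat → List X → (X → X → Bool) → Option (List X × X × List X)
  | 0, _, _, _ => none
  | steps + 1, k, l, le =>
    match l with
    | [] => none
    | pivot :: lst =>
      let sm := lst.filter (fun x => le x pivot && !le pivot x)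
      let eq := lst.filter (fun x => le x pivot && le pivot x)
      let lg := lst.filter (fun x => !le x pivot)
      if k < sm.length then
        match qsp steps k sm le with
        | none => none
        | some (a, x, b) => some (a, x, b ++ ((pivot :: eq) ++ lg))
      else if sm.length + eq.length < k then
        match qsp steps (k - (sm.length + eq.length + 1)) lg le with
        | none => none
        | some (a, x, b) => some (a ++ (sm ++ (pivot :: eq)), x, b)
      else
        some (sm ++ eq.take (k - sm.length), pivot, eq.drop (k - sm.length) ++ lg)

def quick_select {X : Type} (k : Nat) (l : List X) (le : X → X → Bool) :
    Option (List X × X × List X) :=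
  qsp l.length k l le

/-- Data points are lists of naturals. -/
abbrev datapt : Type := List Nat

/-- k-d trees. -/
inductive kdtree : Type where
  | mt_tree : kdtree
  | node : Nat → datapt → kdtree → kdtree → kdtree

/-- Compare two data points on their `i`-th coordinate. -/
def ith_leb (i : Nat) (p q : datapt) : Bool := decide (p.getD i 0 ≤ q.getD i 0)

def median_partition (l : List datapt) (le : datapt → datapt → Bool) :
    Option (List datapt × datapt × List datapt) :=
  quick_select (l.length / 2) l le

def next_depth (k d : Nat) : Nat := (d + 1) % k

def build_kdtree_ : Nat → Nat → List datapt → Nat → kdtree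
  | 0, _, _, _ => .mt_tree
  | fuel + 1, k, data, depth_mod =>
    match data with
    | [] => .mt_tree
    | _ :: _ =>
      match median_partition data (ith_leb depth_mod) with
      | none => .mt_tree
      | some (sm, pvt, lg) =>
        .node depth_mod pvt
          (build_kdtree_ fuel k sm (next_depth k depth_mod))
          (build_kdtree_ fuel k lg (next_depth k depth_mod))

def build_kdtree (k : Nat) (data : List datapt) : kdtree :=
  build_kdtree_ data.length k data 0

/-- Bounding boxes: lower and upper bounds per coordinate (`none` = unbounded). -/
structure bbox : Type where
  mins : List (Option Nat)
  maxs : List (Option Nat)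

def list_set {A : Type} (l : List A) (d : Nat) (v : A) : List A := l.set d v

def bb_split (bb : bbox) (d : Nat) (v : Nat) : bbox × bbox :=
  (⟨bb.mins, list_set bb.maxs d (some v)⟩, ⟨list_set bb.mins d (some v), bb.maxs⟩)

/-- Coordinatewise containment of a point in a bounding box. -/
def bb_contains (bb : bbox) (pt : datapt) : Bool :=
  (List.range pt.length).all (fun i =>
    (match bb.mins.getD i none with
     | none => true
     | some s => decide (s ≤ pt.getD i 0)) &&
    (match bb.maxs.getD i none with
     | none => true
     | some t => decide (pt.getD i 0 ≤ t)))

/-- Manhattan distance between two points (on naturals). -/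
def sum_dist (q p : datapt) : Nat :=
  (List.zipWith (fun a b => (a - b) + (b - a)) q p).sum

/-- Closest enclosed point: clamp each coordinate of `vs` into the box. -/
def cep (vs : datapt) (mins maxs : List (Option Nat)) : datapt :=
  (List.range vs.length).map (fun i =>
    let v := vs.getD i 0
    let v1 := match maxs.getD i none with | none => v | some t => min v t
    match mins.getD i none with | none => v1 | some s => max s v1)

def kdtree_bounded : kdtree → bbox → Bool
  | .mt_tree, _ => true
  | .node ax pt lft rgt, bb =>
    bb_contains bb pt &&
    kdtree_bounded lft (bb_split bb ax (pt.getD ax 0)).1 &&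
    kdtree_bounded rgt (bb_split bb ax (pt.getD ax 0)).2

inductive In_kdtree : datapt → kdtree → Prop where
  | in_root : ∀ ax pt lft rgt, In_kdtree pt (.node ax pt lft rgt)
  | in_left : ∀ v ax pt lft rgt, In_kdtree v lft → In_kdtree v (.node ax pt lft rgt)
  | in_right : ∀ v ax pt lft rgt, In_kdtree v rgt → In_kdtree v (.node ax pt lft rgt)

inductive Contents_kdtree : kdtree → List datapt → Prop where
  | cmt : Contents_kdtree .mt_tree []
  | cnode : ∀ ax pt lft rgt ll rl, Contents_kdtree lft ll → Contents_kdtree rgt rl →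
      Contents_kdtree (.node ax pt lft rgt) (pt :: (ll ++ rl))

/- A (max-)priority queue of elements of `A` keyed by `key : A → Nat`,
   implemented as an unsorted list. -/
abbrev priqueue (A : Type) (_key : A → Nat) : Type := List A

def pq_empty (A : Type) (key : A → Nat) : priqueue A key := []

def pq_insert {A : Type} (key : A → Nat) (e : A) (pq : priqueue A key) : priqueue A key :=
  e :: pq

def pq_size {A : Type} {key : A → Nat} (pq : priqueue A key) : Nat := pq.length

/-- Remove (one) element of maximal key: returns it and the rest. -/
def select_max {A : Type} (key : A → Nat) : A → List A → A × List A
  | x, [] => (x, [])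
  | x, y :: ys =>
    if key y ≤ key x then
      let p := select_max key x ys
      (p.1, y :: p.2)
    else
      let p := select_max key y ys
      (p.1, x :: p.2)

def delete_max {A : Type} (key : A → Nat) : priqueue A key → Option (A × priqueue A key)
  | [] => none
  | x :: xs => some (select_max key x xs)

def peek_max {A : Type} (key : A → Nat) (pq : priqueue A key) : Option A :=
  (delete_max key pq).map Prod.fst

/-- Representation invariant (trivial for the list implementation). -/
def priq {A : Type} (key : A → Nat) (_pq : priqueue A key) : Prop := True

/-- Abstraction relation between a priority queue and a list of its elements. -/
def PQAbs {A : Type} (key : A → Nat) (pq : priqueue A key) (l : List A) : Prop :=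
  pq.Perm l

/-- Insert, but keep the queue size bounded by `K` (discarding a max element). -/
def insert_bounded {A : Type} (K : Nat) (key : A → Nat) (e : A) (pq : priqueue A key) :
    priqueue A key :=
  let updpq := pq_insert key e pq
  if K < pq_size updpq then
    match delete_max key updpq with
    | none => updpq
    | some (_, updpq') => updpq'
  else updpq

/-- K-nearest-neighbor search over a k-d tree with bounding-box pruning. -/
def knn (K k : Nat) : kdtree → bbox → datapt → priqueue datapt (fun _ => 0) → List datapt
  | .mt_tree, _, _, pq => pq
  | .node ax pt lft rgt, bb, query, pq =>
    let prune : Bool :=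
      match peek_max (sum_dist query) pq with
      | none => false
      | some top =>
        decide (K ≤ pq.length) &&
        decide (sum_dist query top < sum_dist query (cep query bb.mins bb.maxs))
    if prune then pq
    else
      let pq0 := insert_bounded K (sum_dist query) pt pq
      let bbs := bb_split bb ax (pt.getD ax 0)
      if ith_leb ax pt query then
        knn K k rgt bbs.2 query (knn K k lft bbs.1 query pq0)
      else
        knn K k lft bbs.1 query (knn K k rgt bbs.2 query pq0)

def knn_search (K k : Nat) (tree : kdtree) (query : datapt) : List datapt :=
  knn K k tree ⟨List.replicate k none, List.replicate k none⟩ query []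

/-- Every element of `l1` has key ≤ every element of `l2`. -/
def all_in_leb {A : Type} (key : A → Nat) (l1 l2 : List A) : Prop :=
  ∀ e1 ∈ l1, ∀ e2 ∈ l2, key e1 ≤ key e2

/-- Drop the first `n` elements of a list. -/
def dropn {A : Type} : Nat → List A → List A
  | 0, lst => lst
  | _ + 1, [] => []
  | n + 1, _ :: t => dropn n t
lemma part_perm {X : Type} (lst : List X) (p : X) (le : X → X → Bool) :
    lst.Perm (lst.filter (fun x => le x p && !le p x) ++
      lst.filter (fun x => le x p && le p x) ++ lst.filter (fun x => !le x p)) := by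
  induction lst with
  | nil => simp
  | cons h t ih =>
    by_cases h1 : le h p <;> by_cases h2 : le p h <;>
    · simp only [List.filter_cons, h1, h2, Bool.and_true, Bool.and_false, Bool.true_and,
        Bool.false_and, Bool.not_true, Bool.not_false, if_true, if_false,
        Bool.and_self, reduceIte]
      rw [← Multiset.coe_eq_coe] at *
      simp only [← Multiset.cons_coe, ← Multiset.coe_add, ← Multiset.singleton_add] at *
      rw [ih]; simp only [Bool.not_true, Bool.not_false, Bool.false_eq_true, if_false, if_true, Bool.and_comm] at *; abel

lemma qsp_spec {X : Type} (le : X → X → Bool) :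
    ∀ steps k (l : List X), l.length ≤ steps → k < l.length →
    ∃ a x b, qsp steps k l le = some (a, x, b) ∧ l.Perm (a ++ x :: b) := by
  intro steps
  induction steps with
  | zero => intro k l hl hk; omega
  | succ n ih =>
    intro k l hl hk
    match l with
    | [] => simp at hk
    | pivot :: lst =>
      have hpart : lst.Perm ((lst.filter (fun x => le x pivot && !le pivot x)) ++
          (lst.filter (fun x => le x pivot && le pivot x)) ++
          (lst.filter (fun x => !le x pivot))) := part_perm lst pivot le
      generalize hsm : lst.filter (fun x => le x pivot && !le pivot x) = sm at hpart
      generalize heq : lst.filter (fun x => le x pivot && le pivot x) = eqs at hpart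
      generalize hlg : lst.filter (fun x => !le x pivot) = lg at hpart
      have hlen : lst.length = sm.length + eqs.length + lg.length := by
        have := hpart.length_eq; simp at this; omega
      have hlst : lst.length ≤ n := by simp at hl; omega
      have hk' : k < lst.length + 1 := by simpa using hk
      by_cases c1 : k < sm.length
      · obtain ⟨a, x, b, hq, hp⟩ := ih k sm (by omega) c1
        refine ⟨a, x, b ++ ((pivot :: eqs) ++ lg), ?_, ?_⟩
        · simp only [qsp, hsm, heq, hlg, c1, if_true, hq]
        · rw [← Multiset.coe_eq_coe] at *
          simp only [← Multiset.cons_coe, ← Multiset.coe_add, ← Multiset.singleton_add] at *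
          rw [hpart, hp]; abel
      · by_cases c2 : sm.length + eqs.length < k
        · obtain ⟨a, x, b, hq, hp⟩ := ih (k - (sm.length + eqs.length + 1)) lg (by omega)
            (by omega)
          refine ⟨a ++ (sm ++ (pivot :: eqs)), x, b, ?_, ?_⟩
          · simp only [qsp, hsm, heq, hlg, c1, c2, if_true, if_false, hq]
          · rw [← Multiset.coe_eq_coe] at *
            simp only [← Multiset.cons_coe, ← Multiset.coe_add, ← Multiset.singleton_add] at *
            rw [hpart, hp]; abel
        · refine ⟨sm ++ eqs.take (k - sm.length), pivot, eqs.drop (k - sm.length) ++ lg, ?_, ?_⟩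
          · simp only [qsp, hsm, heq, hlg, c1, c2, if_false]
          · rw [← Multiset.coe_eq_coe] at *
            simp only [← Multiset.cons_coe, ← Multiset.coe_add, ← Multiset.singleton_add] at *
            have heqs2 : (eqs : Multiset X) = ↑(eqs.take (k - sm.length)) + ↑(eqs.drop (k - sm.length)) := by
              rw [Multiset.coe_add, List.take_append_drop]
            rw [hpart, heqs2]; abel

lemma build_aux (k : Nat) : ∀ fuel (data : List datapt) (depth : Nat), data.length ≤ fuel →
    ∃ lst, Contents_kdtree (build_kdtree_ fuel k data depth) lst ∧ data.Perm lst := by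
  intro fuel
  induction fuel with
  | zero =>
    intro data depth hle
    have : data = [] := List.eq_nil_of_length_eq_zero (by omega)
    subst this
    exact ⟨[], Contents_kdtree.cmt, List.Perm.nil⟩
  | succ n ih =>
    intro data depth hle
    match data with
    | [] => exact ⟨[], Contents_kdtree.cmt, List.Perm.nil⟩
    | h :: t =>
      have hpos : 0 < (h :: t).length := by simp
      obtain ⟨a, x, b, hq, hp⟩ := qsp_spec (ith_leb depth) (h :: t).length
        ((h :: t).length / 2) (h :: t) (le_refl _) (Nat.div_lt_self hpos (by omega))
      have hbuild : build_kdtree_ (n + 1) k (h :: t) depth =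
          .node depth x (build_kdtree_ n k a (next_depth k depth))
            (build_kdtree_ n k b (next_depth k depth)) := by
        simp only [build_kdtree_, median_partition, quick_select, hq]
      have hlen := hp.length_eq
      simp only [List.length_append, List.length_cons] at hlen
      obtain ⟨la, hca, hpa⟩ := ih a (next_depth k depth) (by simp at hle ⊢; omega)
      obtain ⟨lb, hcb, hpb⟩ := ih b (next_depth k depth) (by simp at hle ⊢; omega)
      refine ⟨x :: (la ++ lb), ?_, ?_⟩
      · rw [hbuild]; exact Contents_kdtree.cnode _ _ _ _ _ _ hca hcb
      · rw [← Multiset.coe_eq_coe] at *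
        simp only [← Multiset.cons_coe, ← Multiset.coe_add, ← Multiset.singleton_add] at *
        rw [hp, hpa, hpb]; abel

theorem build_kdtree_contents_perm (k : Nat) (data : List datapt) (hk : 0 < k) :
    ∃ lst, Contents_kdtree (build_kdtree k data) lst ∧ data.Perm lst := by
  obtain ⟨lst, hc, hp⟩ := build_aux k data.length data 0 (le_refl _)
  exact ⟨lst, hc, hp⟩
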